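/- Let Ω be a compact Hausdorff space with its Borel σ-algebra, let E and F be real Banach spaces, let (μ_n) be a sequence of countably additive E*-valued Borel vector measures on Ω, each of bounded variation, and let (y_n) be a sequence in F with Σ_n |μ_n|(Ω)·‖y_n‖ < ∞. For each Borel set B ⊆ Ω, define the nuclear operator G(B) : E → F by G(B)(e) = Σ_n (μ_n(B)(e)) • y_n. Then G is countably additive in the nuclear norm: for every sequence (B_i) of pairwise disjoint Borel subsets of Ω, ‖G(⋃_{i} B_i) − Σ_{i<K} G(B_i)‖_nuc → 0 as K → ∞. (Proposition 1(ii), countable additivity in nuclear norm.) -/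
import Mathlib


open MeasureTheory Filter Topology

section Defs

variable {X Y : Type*} [NormedAddCommGroup X] [NormedSpace ℝ X]
  [NormedAddCommGroup Y] [NormedSpace ℝ Y]

/-- A bounded linear operator is nuclear if it admits a representation
`S x = Σ_n x'_n(x) • y_n` with `Σ_n ‖x'_n‖·‖y_n‖ < ∞`. -/
def IsNuclear (S : X →L[ℝ] Y) : Prop :=
  ∃ (x' : ℕ → (X →L[ℝ] ℝ)) (y : ℕ → Y),
    Summable (fun n => ‖x' n‖ * ‖y n‖) ∧ ∀ x, HasSum (fun n => x' n x • y n) (S x)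

/-- The nuclear norm: the infimum of `Σ_n ‖x'_n‖·‖y_n‖` over all nuclear
representations of `S`. -/
noncomputable def nuclearNorm (S : X →L[ℝ] Y) : ℝ :=
  sInf {c : ℝ | ∃ (x' : ℕ → (X →L[ℝ] ℝ)) (y : ℕ → Y),
    Summable (fun n => ‖x' n‖ * ‖y n‖) ∧ (∀ x, HasSum (fun n => x' n x • y n) (S x)) ∧
    c = ∑' n, ‖x' n‖ * ‖y n‖}

variable {Ω : Type*} [TopologicalSpace Ω]

/-- The elementary tensor `f ⊗ e : ω ↦ f(ω) • e` in `C(Ω, E)`. -/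
noncomputable def tensor (f : C(Ω, ℝ)) (e : X) : C(Ω, X) :=
  ⟨fun ω => f ω • e, (map_continuous f).smul continuous_const⟩

theorem tensor_apply (f : C(Ω, ℝ)) (e : X) (ω : Ω) : tensor f e ω = f ω • e := rfl

variable [CompactSpace Ω]

theorem norm_tensor_le (f : C(Ω, ℝ)) (e : X) : ‖tensor f e‖ ≤ ‖f‖ * ‖e‖ := by
  refine (ContinuousMap.norm_le _ (by positivity)).2 fun ω => ?_
  rw [tensor_apply, norm_smul]
  exact mul_le_mul_of_nonneg_right (f.norm_coe_le_norm ω) (norm_nonneg e)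

/-- The operator `T^# f : E → F`, `e ↦ T (f ⊗ e)`, induced by `T : C(Ω,E) → F`. -/
noncomputable def sharp (T : C(Ω, X) →L[ℝ] Y) (f : C(Ω, ℝ)) : X →L[ℝ] Y :=
  LinearMap.mkContinuous
    { toFun := fun e => T (tensor f e)
      map_add' := fun a b => by
        show T (tensor f (a + b)) = T (tensor f a) + T (tensor f b)
        rw [show tensor f (a + b) = tensor f a + tensor f b from
          ContinuousMap.ext fun ω => smul_add _ _ _, map_add]
      map_smul' := fun c a => by
        show T (tensor f (c • a)) = c • T (tensor f a)
        rw [show tensor f (c • a) = c • tensor f a from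
          ContinuousMap.ext fun ω => smul_comm _ _ _, _root_.map_smul] }
    (‖T‖ * ‖f‖)
    (fun e => by
      calc ‖T (tensor f e)‖ ≤ ‖T‖ * ‖tensor f e‖ := T.le_opNorm _
        _ ≤ ‖T‖ * (‖f‖ * ‖e‖) :=
          mul_le_mul_of_nonneg_left (norm_tensor_le f e) (norm_nonneg T)
        _ = ‖T‖ * ‖f‖ * ‖e‖ := (mul_assoc _ _ _).symm)

theorem sharp_apply (T : C(Ω, X) →L[ℝ] Y) (f : C(Ω, ℝ)) (e : X) :
    sharp T f e = T (tensor f e) := rfl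

/-- The set of sums `Σ_i ‖m(A_i)‖` over finite families of pairwise disjoint
measurable subsets of `B`. -/
def partitionSums {S : Type*} [MeasurableSpace S] (m : Set S → X) (B : Set S) : Set ℝ :=
  {c : ℝ | ∃ (k : ℕ) (A : Fin k → Set S), (∀ i, MeasurableSet (A i)) ∧
    Pairwise (Function.onFun Disjoint A) ∧ (∀ i, A i ⊆ B) ∧ c = ∑ i, ‖m (A i)‖}

/-- The variation `|m|(B)` of a vector measure. -/
noncomputable def variation {S : Type*} [MeasurableSpace S] (m : Set S → X) (B : Set S) : ℝ :=
  sSup (partitionSums m B)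

/-- A Banach space `X` has the Radon–Nikodym property if every countably additive
`X`-valued vector measure of bounded variation which is absolutely continuous with
respect to a finite measure `μ` has a Bochner-integrable density with respect to `μ`. -/
def HasRNP (X : Type*) [NormedAddCommGroup X] [NormedSpace ℝ X] : Prop :=
  ∀ (S : Type) (_ : MeasurableSpace S) (μ : Measure S), IsFiniteMeasure μ →
    ∀ m : VectorMeasure S X, BddAbove (partitionSums (⇑m) Set.univ) →
      (∀ A : Set S, MeasurableSet A → μ A = 0 → m A = 0) →
      ∃ g : S → X, Integrable g μ ∧ ∀ A : Set S, MeasurableSet A → m A = ∫ x in A, g x ∂μ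

end Defs

/-- Proposition 1(ii), countable additivity in nuclear norm: for pairwise disjoint
Borel sets `B_i`, `‖G(⋃ᵢ Bᵢ) − Σ_{i<K} G(Bᵢ)‖_nuc → 0`. -/
theorem countably_additive_nuclearNorm {Ω : Type*} [TopologicalSpace Ω] [CompactSpace Ω] [T2Space Ω]
    [MeasurableSpace Ω] [BorelSpace Ω]
    {E F : Type*} [NormedAddCommGroup E] [NormedSpace ℝ E] [CompleteSpace E]
    [NormedAddCommGroup F] [NormedSpace ℝ F] [CompleteSpace F]
    (μ : ℕ → VectorMeasure Ω (E →L[ℝ] ℝ))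
    (hbv : ∀ n, BddAbove (partitionSums (⇑(μ n)) Set.univ))
    (y : ℕ → F)
    (hsum : Summable fun n => variation (⇑(μ n)) Set.univ * ‖y n‖)
    (G : Set Ω → (E →L[ℝ] F))
    (hG : ∀ B : Set Ω, MeasurableSet B → ∀ e : E, HasSum (fun n => μ n B e • y n) (G B e))
    (B : ℕ → Set Ω)
    (hmeas : ∀ i, MeasurableSet (B i))
    (hdisj : Pairwise (Function.onFun Disjoint B)) :
    Tendsto (fun K => nuclearNorm (G (⋃ i, B i) - ∑ i ∈ Finset.range K, G (B i)))
      atTop (𝓝 0) := by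
  classical
  set U := ⋃ i, B i with hU
  have hUmeas : MeasurableSet U := MeasurableSet.iUnion hmeas
  set D : ℕ → Set Ω := fun K => ⋃ i, B (i + K) with hD
  have hDmeas : ∀ K, MeasurableSet (D K) := fun K => MeasurableSet.iUnion fun i => hmeas _
  have hμU : ∀ n, HasSum (fun i => μ n (B i)) (μ n U) := fun n =>
    (μ n).m_iUnion hmeas hdisj
  have hμD : ∀ n K, HasSum (fun i => μ n (B (i + K))) (μ n (D K)) := fun n K =>
    (μ n).m_iUnion (fun i => hmeas _) (fun i j hij => hdisj (show i + K ≠ j + K by omega))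
  have hDval : ∀ n K, μ n (D K) = μ n U - ∑ i ∈ Finset.range K, μ n (B i) := fun n K =>
    (hμD n K).unique ((hasSum_nat_add_iff' K).2 (hμU n))
  have hnorm_le : ∀ n (A : Set Ω), MeasurableSet A →
      ‖μ n A‖ ≤ variation (⇑(μ n)) Set.univ := by
    intro n A hA
    refine le_csSup (hbv n) ?_
    exact ⟨1, fun _ => A, fun _ => hA,
      fun i j hij => absurd (Subsingleton.elim i j) hij,
      fun _ => Set.subset_univ _, by simp⟩
  have hrep : ∀ K e, HasSum (fun n => μ n (D K) e • y n)
      ((G U - ∑ i ∈ Finset.range K, G (B i)) e) := by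
    intro K e
    have h1 := hG U hUmeas e
    have h2 : HasSum (fun n => (∑ i ∈ Finset.range K, μ n (B i) e) • y n)
        ((∑ i ∈ Finset.range K, G (B i)) e) := by
      have h := hasSum_sum (f := fun i n => μ n (B i) e • y n)
        (a := fun i => G (B i) e) (s := Finset.range K)
        (fun i _ => hG (B i) (hmeas i) e)
      simpa [Finset.sum_smul, ContinuousLinearMap.sum_apply] using h
    have h3 := h1.sub h2
    have heq : (fun n => μ n (D K) e • y n) =
        fun n => μ n U e • y n - (∑ i ∈ Finset.range K, μ n (B i) e) • y n := by
      funext n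
      rw [hDval n K]
      simp [sub_smul, ContinuousLinearMap.sub_apply, ContinuousLinearMap.sum_apply]
    rw [heq]
    simpa [ContinuousLinearMap.sub_apply, ContinuousLinearMap.sum_apply] using h3
  have hsummK : ∀ K, Summable (fun n => ‖μ n (D K)‖ * ‖y n‖) := fun K =>
    Summable.of_nonneg_of_le (fun n => by positivity)
      (fun n => mul_le_mul_of_nonneg_right (hnorm_le n _ (hDmeas K)) (norm_nonneg _)) hsum
  have hmem : ∀ K, (∑' n, ‖μ n (D K)‖ * ‖y n‖) ∈
      {c : ℝ | ∃ (x' : ℕ → (E →L[ℝ] ℝ)) (yy : ℕ → F),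
        Summable (fun n => ‖x' n‖ * ‖yy n‖) ∧
        (∀ x, HasSum (fun n => x' n x • yy n)
          ((G U - ∑ i ∈ Finset.range K, G (B i)) x)) ∧
        c = ∑' n, ‖x' n‖ * ‖yy n‖} := fun K =>
    ⟨fun n => μ n (D K), y, hsummK K, hrep K, rfl⟩
  have hbdd : ∀ K, BddBelow {c : ℝ | ∃ (x' : ℕ → (E →L[ℝ] ℝ)) (yy : ℕ → F),
        Summable (fun n => ‖x' n‖ * ‖yy n‖) ∧
        (∀ x, HasSum (fun n => x' n x • yy n)
          ((G U - ∑ i ∈ Finset.range K, G (B i)) x)) ∧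
        c = ∑' n, ‖x' n‖ * ‖yy n‖} := by
    intro K
    refine ⟨0, fun c hc => ?_⟩
    obtain ⟨x', yy, _, _, rfl⟩ := hc
    exact tsum_nonneg fun n => by positivity
  have hle : ∀ K, nuclearNorm (G U - ∑ i ∈ Finset.range K, G (B i)) ≤
      ∑' n, ‖μ n (D K)‖ * ‖y n‖ := fun K => csInf_le (hbdd K) (hmem K)
  have hge : ∀ K, 0 ≤ nuclearNorm (G U - ∑ i ∈ Finset.range K, G (B i)) := fun K =>
    le_csInf ⟨_, hmem K⟩ fun c hc => by
      obtain ⟨x', yy, _, _, rfl⟩ := hc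
      exact tsum_nonneg fun n => by positivity
  have htail : ∀ n, Tendsto (fun K => ‖μ n (D K)‖ * ‖y n‖) atTop (𝓝 0) := by
    intro n
    have h0 : Tendsto (fun K => μ n (D K)) atTop (𝓝 0) := by
      simp_rw [hDval n]
      have h := ((hμU n).tendsto_sum_nat).const_sub (μ n U)
      simpa using h
    have := (h0.norm).mul_const ‖y n‖
    simpa using this
  have hT : Tendsto (fun K => ∑' n, ‖μ n (D K)‖ * ‖y n‖) atTop (𝓝 0) := by
    have h := tendsto_tsum_of_dominated_convergence (f := fun K n => ‖μ n (D K)‖ * ‖y n‖)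
      (g := fun _ => (0 : ℝ)) (bound := fun n => variation (⇑(μ n)) Set.univ * ‖y n‖)
      hsum htail (Filter.Eventually.of_forall fun K n => by
        rw [Real.norm_of_nonneg (by positivity)]
        exact mul_le_mul_of_nonneg_right (hnorm_le n _ (hDmeas K)) (norm_nonneg _))
    simpa using h
  exact squeeze_zero hge hle hT
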